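/- Let A be a real m×n matrix of rank n with m ≥ n. Then det(AᵀA) · (AᵀA)⁻¹ Aᵀ = Σ_{p : det(A_p) ≠ 0} det(A_p)² · embb(A_p⁻¹, p, m), where the sum ranges over all subsets p of {1,…,m} of size n whose associated row-submatrix A_p is invertible. -/

import Mathlib

open scoped Classical
open Matrix

/-- `rowSub A p h` is the `n × n` submatrix of the `m × n` matrix `A` consisting of the
rows of `A` indexed by the subset `p ⊆ {1,…,m}` of size `n`, kept in their original order. -/
noncomputable def rowSub {m n : ℕ} (A : Matrix (Fin m) (Fin n) ℝ)
    (p : Finset (Fin m)) (h : p.card = n) : Matrix (Fin n) (Fin n) ℝ :=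
  fun i j => A (p.orderEmbOfFin h i) j

/-- `embb B p h` is the `n × m` matrix whose `pᵢ`-th column is the `i`-th column of the
`n × n` matrix `B` (where `p₁ < … < p_n` are the elements of `p`), and whose other
columns are zero. -/
noncomputable def embb {m n : ℕ} (B : Matrix (Fin n) (Fin n) ℝ)
    (p : Finset (Fin m)) (h : p.card = n) : Matrix (Fin n) (Fin m) ℝ :=
  fun i k => if hk : k ∈ p then B i ((p.orderIsoOfFin h).symm ⟨k, hk⟩) else 0

namespace CBAux

variable {m n : ℕ}

/-- Expansion of `det (Aᵀ * C)` as a sum over all functions `Fin n → Fin m`. -/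
lemma det_transpose_mul_expand (A C : Matrix (Fin m) (Fin n) ℝ) :
    (Aᵀ * C).det = ∑ f : Fin n → Fin m,
      (∏ j, C (f j) j) * (Aᵀ.submatrix id f).det := by
  calc (Aᵀ * C).det
      = ∑ f : Fin n → Fin m, ∑ σ : Equiv.Perm (Fin n),
          (Equiv.Perm.sign σ : ℝ) * ∏ i, Aᵀ (σ i) (f i) * C (f i) i := by
        simp only [det_apply', mul_apply, Finset.prod_univ_sum, Finset.mul_sum,
          Fintype.piFinset_univ]
        rw [Finset.sum_comm]
    _ = _ := by
        refine Finset.sum_congr rfl fun f _ => ?_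
        rw [det_apply', Finset.mul_sum]
        refine Finset.sum_congr rfl fun σ _ => ?_
        rw [Finset.prod_mul_distrib]
        simp only [submatrix_apply, id_eq]
        ring

lemma det_submatrix_eq_zero {A : Matrix (Fin m) (Fin n) ℝ} {f : Fin n → Fin m}
    (hf : ¬ Function.Injective f) : (Aᵀ.submatrix id f).det = 0 := by
  rw [Function.Injective] at hf
  push_neg at hf
  obtain ⟨i, j, hij, hne⟩ := hf
  exact det_zero_of_column_eq hne (fun k => by simp [submatrix_apply, hij])

/-- The equivalence between pairs (size-`n` subset, permutation) and injective
functions `Fin n → Fin m`. -/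
noncomputable def injEquiv :
    ({s : Finset (Fin m) // s.card = n} × Equiv.Perm (Fin n)) ≃
      {f : Fin n → Fin m // Function.Injective f} := by
  refine Equiv.ofBijective
    (fun x => ⟨x.1.1.orderEmbOfFin x.1.2 ∘ x.2,
      (x.1.1.orderEmbOfFin x.1.2).injective.comp x.2.injective⟩) ⟨?_, ?_⟩
  · rintro ⟨⟨p, hp⟩, σ⟩ ⟨⟨q, hq⟩, τ⟩ h
    have hfun : (p.orderEmbOfFin hp) ∘ σ = (q.orderEmbOfFin hq) ∘ τ :=
      congrArg Subtype.val h
    have hpq : p = q := by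
      have h1 : Set.range ((p.orderEmbOfFin hp) ∘ σ) = (p : Set (Fin m)) := by
        rw [Set.range_comp, σ.surjective.range_eq, Set.image_univ,
          Finset.range_orderEmbOfFin]
      have h2 : Set.range ((q.orderEmbOfFin hq) ∘ τ) = (q : Set (Fin m)) := by
        rw [Set.range_comp, τ.surjective.range_eq, Set.image_univ,
          Finset.range_orderEmbOfFin]
      exact Finset.coe_injective (by rw [← h1, ← h2, hfun])
    subst hpq
    have hστ : σ = τ := Equiv.coe_fn_injective
      (funext fun j => (p.orderEmbOfFin hp).injective (congrFun hfun j))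
    simp [hστ]
  · rintro ⟨f, hf⟩
    set p : Finset (Fin m) := Finset.univ.image f with hpdef
    have hp : p.card = n := by
      rw [hpdef, Finset.card_image_of_injective _ hf, Finset.card_univ, Fintype.card_fin]
    have hmem : ∀ j, f j ∈ p := fun j => Finset.mem_image_of_mem f (Finset.mem_univ j)
    set σ0 : Fin n → Fin n := fun j => (p.orderIsoOfFin hp).symm ⟨f j, hmem j⟩ with hσ0
    have hσ0inj : Function.Injective σ0 := by
      intro a b hab
      rw [hσ0] at hab
      have h2 := congrArg (p.orderIsoOfFin hp) hab
      simp only [OrderIso.apply_symm_apply, Subtype.mk.injEq] at h2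
      exact hf h2
    refine ⟨⟨⟨p, hp⟩, Equiv.ofBijective σ0 (Finite.injective_iff_bijective.mp hσ0inj)⟩, ?_⟩
    refine Subtype.ext ?_
    funext j
    show p.orderEmbOfFin hp (σ0 j) = f j
    rw [hσ0, ← Finset.coe_orderIsoOfFin_apply, OrderIso.apply_symm_apply]

lemma sum_over_injective (F : (Fin n → Fin m) → ℝ)
    (h0 : ∀ f, ¬ Function.Injective f → F f = 0) :
    ∑ f : Fin n → Fin m, F f
      = ∑ p : {s : Finset (Fin m) // s.card = n}, ∑ σ : Equiv.Perm (Fin n),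
          F (p.1.orderEmbOfFin p.2 ∘ σ) := by
  have h1 : ∑ f : Fin n → Fin m, F f
      = ∑ f ∈ Finset.univ.filter (fun f : Fin n → Fin m => Function.Injective f), F f := by
    refine (Finset.sum_filter_of_ne ?_).symm
    intro f _ hFf
    by_contra hni
    exact hFf (h0 f hni)
  have h2 : ∑ f ∈ Finset.univ.filter (fun f : Fin n → Fin m => Function.Injective f), F f
      = ∑ f : {f : Fin n → Fin m // Function.Injective f}, F f.1 := by
    rw [Finset.sum_subtype (Finset.univ.filter (fun f : Fin n → Fin m => Function.Injective f))
      (p := fun f : Fin n → Fin m => Function.Injective f) (fun x => by simp) F]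
  rw [h1, h2, ← Equiv.sum_comp (injEquiv (m := m) (n := n)) (fun f => F f.1),
    Fintype.sum_prod_type]
  rfl

lemma rowSub_eq (A : Matrix (Fin m) (Fin n) ℝ) (p : Finset (Fin m)) (hp : p.card = n) :
    rowSub A p hp = A.submatrix (p.orderEmbOfFin hp) id := rfl

/-- Cauchy–Binet formula. -/
lemma cauchy_binet (A C : Matrix (Fin m) (Fin n) ℝ) :
    (Aᵀ * C).det = ∑ p : {s : Finset (Fin m) // s.card = n},
      (rowSub A p.1 p.2).det * (rowSub C p.1 p.2).det := by
  rw [det_transpose_mul_expand,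
    sum_over_injective _ (fun f hf => by rw [det_submatrix_eq_zero hf, mul_zero])]
  refine Finset.sum_congr rfl fun p _ => ?_
  have key : ∀ σ : Equiv.Perm (Fin n),
      (∏ j, C ((p.1.orderEmbOfFin p.2 ∘ σ) j) j)
        * (Aᵀ.submatrix id (p.1.orderEmbOfFin p.2 ∘ σ)).det
      = (rowSub A p.1 p.2).det *
          ((Equiv.Perm.sign σ : ℝ) * ∏ j, (rowSub C p.1 p.2) (σ j) j) := by
    intro σ
    have hsub : Aᵀ.submatrix id (p.1.orderEmbOfFin p.2 ∘ σ)
        = ((rowSub A p.1 p.2)ᵀ).submatrix id σ := by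
      ext a b
      simp [rowSub, submatrix_apply, transpose_apply]
    rw [hsub, det_permute', det_transpose]
    simp only [rowSub, Function.comp_apply]
    ring
  rw [Finset.sum_congr rfl (fun σ _ => key σ), ← Finset.mul_sum]
  congr 1
  rw [det_apply']

end CBAux

open CBAux in
theorem det_smul_pinv_eq_sum_embb {m n : ℕ} (hmn : n ≤ m)
    (A : Matrix (Fin m) (Fin n) ℝ) (hA : A.rank = n) :
    (A.transpose * A).det • ((A.transpose * A)⁻¹ * A.transpose) =
      ∑ p : {s : Finset (Fin m) // s.card = n},
        if (rowSub A p.1 p.2).det ≠ 0 then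
          ((rowSub A p.1 p.2).det ^ 2) • embb (rowSub A p.1 p.2)⁻¹ p.1 p.2
        else 0 := by
  set M := Aᵀ * A with hMdef
  -- M is invertible
  have hMdet : M.det ≠ 0 := by
    have hr : M.rank = Fintype.card (Fin n) := by
      rw [hMdef, rank_transpose_mul_self, hA, Fintype.card_fin]
    have htop : LinearMap.range M.mulVecLin = ⊤ := by
      apply Submodule.eq_top_of_finrank_eq
      rw [show Module.finrank ℝ (LinearMap.range M.mulVecLin) = M.rank from rfl, hr]
      simp [Module.finrank_fintype_fun_eq_card]
    have hsurj : Function.Surjective M.mulVec := by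
      intro v
      obtain ⟨x, hx⟩ := LinearMap.range_eq_top.mp htop v
      exact ⟨x, hx⟩
    have := mulVec_surjective_iff_isUnit.mp hsurj
    exact ((isUnit_iff_isUnit_det M).mp this).ne_zero
  have h1 : M.det • (M⁻¹ * Aᵀ) = M.adjugate * Aᵀ := by
    rw [Matrix.inv_def, Ring.inverse_eq_inv', Matrix.smul_mul, smul_smul,
      mul_inv_cancel₀ hMdet, one_smul]
  rw [h1]
  ext i k
  -- LHS entry via Cramer's rule
  have lhs1 : (M.adjugate * Aᵀ) i k = (M.updateCol i (fun l => A k l)).det := by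
    rw [← cramer_apply]
    rw [cramer_eq_adjugate_mulVec]
    simp [mulVec, dotProduct, mul_apply]
  have hC : M.updateCol i (fun l => A k l)
      = Aᵀ * (A.updateCol i (Pi.single k 1)) := by
    ext a b
    by_cases hb : b = i
    · subst hb
      simp [updateCol_apply, mul_apply, Pi.single_apply, mul_ite]
    · simp [updateCol_apply, hb, hMdef, mul_apply]
  rw [lhs1, hC, cauchy_binet, Matrix.sum_apply]
  refine Finset.sum_congr rfl fun p _ => ?_
  set B := rowSub A p.1 p.2 with hBdef
  set g := p.1.orderEmbOfFin p.2 with hg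
  have hrs : rowSub (A.updateCol i (Pi.single k 1)) p.1 p.2
      = B.updateCol i (fun a => if g a = k then 1 else 0) := by
    ext a b
    by_cases hb : b = i
    · subst hb; simp [rowSub, updateCol_apply, Pi.single_apply, hBdef, hg, eq_comm]
    · simp [rowSub, updateCol_apply, hb, hBdef]
  rw [hrs]
  by_cases hk : k ∈ p.1
  · -- k is in p
    set i₀ : Fin n := (p.1.orderIsoOfFin p.2).symm ⟨k, hk⟩ with hi₀
    have hgi₀ : g i₀ = k := by
      rw [hg, hi₀, ← Finset.coe_orderIsoOfFin_apply, OrderIso.apply_symm_apply]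
    have hcol : (fun a => if g a = k then (1:ℝ) else 0) = Pi.single i₀ 1 := by
      funext a
      by_cases ha : a = i₀
      · subst ha; simp [hgi₀]
      · have : g a ≠ k := fun h => ha (g.injective (by rw [hgi₀, h]))
        simp [this, Pi.single_apply, ha]
    have hadj : (B.updateCol i (Pi.single i₀ 1)).det = B.adjugate i i₀ := by
      rw [← det_transpose, updateRow_transpose.symm, ← adjugate_apply, ← adjugate_transpose,
        transpose_apply]
    rw [hcol, hadj]
    by_cases hdB : B.det = 0
    · simp [hdB]
    · rw [if_pos hdB, Matrix.smul_apply, embb]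
      simp only [hk, dif_pos]
      rw [Matrix.inv_def, Ring.inverse_eq_inv', Matrix.smul_apply, ← hi₀]
      field_simp
      linear_combination (-(B.det * B.adjugate i i₀)) * mul_inv_cancel₀ hdB
  · -- k not in p : both sides vanish
    have hz : (B.updateCol i (fun a => if g a = k then (1:ℝ) else 0)).det = 0 := by
      apply det_eq_zero_of_column_eq_zero i
      intro a
      have : g a ≠ k := fun h => hk (h ▸ Finset.orderEmbOfFin_mem p.1 p.2 a)
      simp [updateCol_apply, this]
    rw [hz, mul_zero]
    by_cases hdB : B.det = 0
    · simp [hdB]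
    · rw [if_pos hdB, Matrix.smul_apply, embb]
      simp [hk]
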